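/- Let Ω ⊆ ℂ be a nonempty open set and let 𝓛 be a ℂ-linear subspace of 𝒜(Ω) that is closed under the Lie bracket (a Lie subalgebra). Then 𝓛 has codimension one as a ℂ-vector subspace of 𝒜(Ω) if and only if there exists α ∈ Ω such that 𝓛 = M_α = {f ∈ 𝒜(Ω) : f(α) = 0}. -/

import Mathlib

set_option synthInstance.maxHeartbeats 1000000
set_option maxHeartbeats 1000000

open Complex
open scoped Classical

noncomputable section

/-- The algebra `A(Omega)` of complex analytic functions on `Omega`, realized as those
functions `Omega -> C` that agree on `Omega` with some function differentiable on `Omega`. -/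
def analyticAlg (Ω : Set ℂ) : Subalgebra ℂ (Ω → ℂ) where
  carrier := {f | ∃ F : ℂ → ℂ, DifferentiableOn ℂ F Ω ∧ ∀ z : Ω, F z = f z}
  add_mem' := by
    rintro f g ⟨F, hF, hFf⟩ ⟨G, hG, hGg⟩
    exact ⟨F + G, hF.add hG, fun z => by simp [hFf z, hGg z]⟩
  mul_mem' := by
    rintro f g ⟨F, hF, hFf⟩ ⟨G, hG, hGg⟩
    exact ⟨F * G, hF.mul hG, fun z => by simp [hFf z, hGg z]⟩
  algebraMap_mem' := fun r => ⟨fun _ => r, differentiableOn_const r, fun _ => rfl⟩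

/-- Extension of a function on `Omega` to the whole plane by zero. -/
def extFun (Ω : Set ℂ) (f : Ω → ℂ) : ℂ → ℂ :=
  fun z => if h : z ∈ Ω then f ⟨z, h⟩ else 0

/-- The complex derivative of an analytic function on `Omega`. -/
def derivΩ (Ω : Set ℂ) (f : Ω → ℂ) : Ω → ℂ :=
  fun z => deriv (extFun Ω f) z

lemma derivΩ_mem {Ω : Set ℂ} (hΩ : IsOpen Ω) {f : Ω → ℂ}
    (hf : f ∈ analyticAlg Ω) : derivΩ Ω f ∈ analyticAlg Ω := by
  obtain ⟨F, hF, hFf⟩ := hf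
  refine ⟨deriv F, ((hF.analyticOnNhd hΩ).deriv).differentiableOn, fun z => ?_⟩
  have hev : extFun Ω f =ᶠ[nhds (z : ℂ)] F := by
    filter_upwards [hΩ.mem_nhds z.2] with w hw
    simp [extFun, hw, hFf ⟨w, hw⟩]
  exact (hev.deriv_eq).symm

/-- The Lie bracket `[f, g] = f * g' - f' * g` on `A(Omega)`. -/
def lieBkt {Ω : Set ℂ} (hΩ : IsOpen Ω) (f g : ↥(analyticAlg Ω)) : ↥(analyticAlg Ω) :=
  ⟨(f : Ω → ℂ) * derivΩ Ω g - derivΩ Ω f * (g : Ω → ℂ),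
   sub_mem (mul_mem f.2 (derivΩ_mem hΩ g.2)) (mul_mem (derivΩ_mem hΩ f.2) g.2)⟩

namespace Stmt14

variable {Ω : Set ℂ}

lemma derivΩ_spec (hΩ : IsOpen Ω) {f : Ω → ℂ} {F : ℂ → ℂ}
    (hFf : ∀ z : Ω, F z = f z) (z : Ω) : derivΩ Ω f z = deriv F z := by
  have hev : extFun Ω f =ᶠ[nhds (z : ℂ)] F := by
    filter_upwards [hΩ.mem_nhds z.2] with w hw
    simp [extFun, hw, hFf ⟨w, hw⟩]
  exact hev.deriv_eq

def mkA (Ω : Set ℂ) (F : ℂ → ℂ) (hF : DifferentiableOn ℂ F Ω) : ↥(analyticAlg Ω) :=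
  ⟨fun z => F z, F, hF, fun _ => rfl⟩

lemma diffAt (hΩ : IsOpen Ω) {F : ℂ → ℂ} (hF : DifferentiableOn ℂ F Ω) (z : Ω) :
    DifferentiableAt ℂ F z := hF.differentiableAt (hΩ.mem_nhds z.2)

lemma derivDiffAt (hΩ : IsOpen Ω) {F : ℂ → ℂ} (hF : DifferentiableOn ℂ F Ω) (z : Ω) :
    DifferentiableAt ℂ (deriv F) z := ((hF.analyticOnNhd hΩ).deriv z z.2).differentiableAt

lemma lieBkt_val (hΩ : IsOpen Ω) (f g : ↥(analyticAlg Ω)) (z : Ω) :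
    (lieBkt hΩ f g).1 z = f.1 z * derivΩ Ω g.1 z - derivΩ Ω f.1 z * g.1 z := rfl

lemma derivΩ_add (hΩ : IsOpen Ω) (f g : ↥(analyticAlg Ω)) (z : Ω) :
    derivΩ Ω (↑(f + g)) z = derivΩ Ω f.1 z + derivΩ Ω g.1 z := by
  obtain ⟨F, hF, hFf⟩ := f.2
  obtain ⟨G, hG, hGg⟩ := g.2
  rw [derivΩ_spec hΩ hFf z, derivΩ_spec hΩ hGg z,
      derivΩ_spec hΩ (F := F + G) (f := ↑(f + g)) (fun w => by simp [hFf w, hGg w]) z]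
  exact deriv_add (diffAt hΩ hF z) (diffAt hΩ hG z)

lemma derivΩ_smul (hΩ : IsOpen Ω) (c : ℂ) (f : ↥(analyticAlg Ω)) (z : Ω) :
    derivΩ Ω (↑(c • f)) z = c * derivΩ Ω f.1 z := by
  obtain ⟨F, hF, hFf⟩ := f.2
  rw [derivΩ_spec hΩ hFf z,
      derivΩ_spec hΩ (F := fun w => c * F w) (f := ↑(c • f)) (fun w => by simp [hFf w]) z]
  simp [deriv_const_mul c (diffAt hΩ hF z)]

lemma derivΩ_one (hΩ : IsOpen Ω) (z : Ω) :
    derivΩ Ω (↑(1 : ↥(analyticAlg Ω))) z = 0 := by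
  rw [derivΩ_spec hΩ (F := fun _ => (1:ℂ)) (f := ↑(1 : ↥(analyticAlg Ω))) (fun w => by simp) z]
  simp

lemma derivΩ_mul (hΩ : IsOpen Ω) (f g : ↥(analyticAlg Ω)) (z : Ω) :
    derivΩ Ω (↑(f * g)) z = f.1 z * derivΩ Ω g.1 z + derivΩ Ω f.1 z * g.1 z := by
  obtain ⟨F, hF, hFf⟩ := f.2
  obtain ⟨G, hG, hGg⟩ := g.2
  rw [derivΩ_spec hΩ hFf z, derivΩ_spec hΩ hGg z,
      derivΩ_spec hΩ (F := fun w => F w * G w) (f := ↑(f * g)) (fun w => by simp [hFf w, hGg w]) z,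
      deriv_fun_mul (diffAt hΩ hF z) (diffAt hΩ hG z), hFf z, hGg z]
  ring
lemma valA_ext {f g : ↥(analyticAlg Ω)} (h : ∀ z : Ω, f.1 z = g.1 z) : f = g :=
  Subtype.ext (funext h)

lemma bkt_antisymm (hΩ : IsOpen Ω) (f g : ↥(analyticAlg Ω)) :
    lieBkt hΩ f g = - lieBkt hΩ g f := by
  refine valA_ext fun z => ?_
  have : (-(lieBkt hΩ g f)).1 z = -((lieBkt hΩ g f).1 z) := rfl
  rw [this, lieBkt_val, lieBkt_val]
  ring

lemma bkt_add_left (hΩ : IsOpen Ω) (f g h : ↥(analyticAlg Ω)) :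
    lieBkt hΩ (f + g) h = lieBkt hΩ f h + lieBkt hΩ g h := by
  refine valA_ext fun z => ?_
  have hv : (lieBkt hΩ f h + lieBkt hΩ g h).1 z = (lieBkt hΩ f h).1 z + (lieBkt hΩ g h).1 z := rfl
  rw [hv, lieBkt_val, lieBkt_val, lieBkt_val, derivΩ_add hΩ f g z]
  have : (↑(f + g) : Ω → ℂ) z = f.1 z + g.1 z := rfl
  rw [this]; ring

lemma bkt_smul_left (hΩ : IsOpen Ω) (c : ℂ) (f h : ↥(analyticAlg Ω)) :
    lieBkt hΩ (c • f) h = c • lieBkt hΩ f h := by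
  refine valA_ext fun z => ?_
  have hv : (c • lieBkt hΩ f h).1 z = c * (lieBkt hΩ f h).1 z := rfl
  rw [hv, lieBkt_val, lieBkt_val, derivΩ_smul hΩ c f z]
  have : (↑(c • f) : Ω → ℂ) z = c * f.1 z := rfl
  rw [this]; ring

lemma bkt_add_right (hΩ : IsOpen Ω) (f g h : ↥(analyticAlg Ω)) :
    lieBkt hΩ f (g + h) = lieBkt hΩ f g + lieBkt hΩ f h := by
  rw [bkt_antisymm hΩ f (g + h), bkt_add_left, bkt_antisymm hΩ g f, bkt_antisymm hΩ h f]
  abel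

lemma bkt_smul_right (hΩ : IsOpen Ω) (c : ℂ) (f h : ↥(analyticAlg Ω)) :
    lieBkt hΩ f (c • h) = c • lieBkt hΩ f h := by
  rw [bkt_antisymm hΩ f (c • h), bkt_smul_left, bkt_antisymm hΩ h f]
  simp

lemma bkt_self (hΩ : IsOpen Ω) (f : ↥(analyticAlg Ω)) : lieBkt hΩ f f = 0 := by
  refine valA_ext fun z => ?_
  have hv : ((0 : ↥(analyticAlg Ω))).1 z = 0 := rfl
  rw [hv, lieBkt_val]; ring

/-- The derivative as an element of the algebra. -/
def DD (hΩ : IsOpen Ω) (f : ↥(analyticAlg Ω)) : ↥(analyticAlg Ω) :=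
  ⟨derivΩ Ω f.1, derivΩ_mem hΩ f.2⟩

lemma bkt_one_left (hΩ : IsOpen Ω) (g : ↥(analyticAlg Ω)) :
    lieBkt hΩ (1 : ↥(analyticAlg Ω)) g = DD hΩ g := by
  refine valA_ext fun z => ?_
  have hv : (DD hΩ g).1 z = derivΩ Ω g.1 z := rfl
  have h1 : ((1 : ↥(analyticAlg Ω))).1 z = 1 := rfl
  rw [hv, lieBkt_val, derivΩ_one hΩ z, h1]; ring

lemma bkt_one_right (hΩ : IsOpen Ω) (f : ↥(analyticAlg Ω)) :
    lieBkt hΩ f (1 : ↥(analyticAlg Ω)) = - DD hΩ f := by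
  rw [bkt_antisymm hΩ f 1, bkt_one_left]
lemma derivΩ_bkt (hΩ : IsOpen Ω) (g h : ↥(analyticAlg Ω)) (z : Ω) :
    derivΩ Ω (↑(lieBkt hΩ g h)) z =
      g.1 z * derivΩ Ω (↑(DD hΩ h)) z - derivΩ Ω (↑(DD hΩ g)) z * h.1 z := by
  obtain ⟨G, hG, hGg⟩ := g.2
  obtain ⟨H, hH, hHh⟩ := h.2
  have hG' : DifferentiableOn ℂ (deriv G) Ω := ((hG.analyticOnNhd hΩ).deriv).differentiableOn
  have hH' : DifferentiableOn ℂ (deriv H) Ω := ((hH.analyticOnNhd hΩ).deriv).differentiableOn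
  have hrep : ∀ w : Ω, (G * deriv H - deriv G * H) (w : ℂ) = (↑(lieBkt hΩ g h) : Ω → ℂ) w := by
    intro w
    show G w * deriv H w - deriv G w * H w = _
    rw [lieBkt_val hΩ g h w, derivΩ_spec hΩ hGg w, derivΩ_spec hΩ hHh w, hGg w, hHh w]
  have hDg : ∀ w : Ω, deriv G (w : ℂ) = (↑(DD hΩ g) : Ω → ℂ) w := by
    intro w; exact (derivΩ_spec hΩ hGg w).symm
  have hDh : ∀ w : Ω, deriv H (w : ℂ) = (↑(DD hΩ h) : Ω → ℂ) w := by
    intro w; exact (derivΩ_spec hΩ hHh w).symm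
  rw [derivΩ_spec hΩ hrep z, derivΩ_spec hΩ hDg z, derivΩ_spec hΩ hDh z]
  have d1 : DifferentiableAt ℂ (fun w => G w * deriv H w) z :=
    (diffAt hΩ hG z).mul (diffAt hΩ hH' z)
  have d2 : DifferentiableAt ℂ (fun w => deriv G w * H w) z :=
    (diffAt hΩ hG' z).mul (diffAt hΩ hH z)
  have hsub : (G * deriv H - deriv G * H) = (fun w => G w * deriv H w - deriv G w * H w) := rfl
  rw [hsub, deriv_fun_sub d1 d2, deriv_fun_mul (diffAt hΩ hG z) (diffAt hΩ hH' z),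
      deriv_fun_mul (diffAt hΩ hG' z) (diffAt hΩ hH z), hGg z, hHh z]
  ring

lemma jacobi (hΩ : IsOpen Ω) (f g h : ↥(analyticAlg Ω)) :
    lieBkt hΩ f (lieBkt hΩ g h) + lieBkt hΩ g (lieBkt hΩ h f)
      + lieBkt hΩ h (lieBkt hΩ f g) = 0 := by
  refine valA_ext fun z => ?_
  have hv : ∀ a b c : ↥(analyticAlg Ω), (a + b + c).1 z = a.1 z + b.1 z + c.1 z := fun _ _ _ => rfl
  have h0 : ((0 : ↥(analyticAlg Ω))).1 z = 0 := rfl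
  rw [hv, h0, lieBkt_val hΩ f (lieBkt hΩ g h) z, lieBkt_val hΩ g (lieBkt hΩ h f) z,
      lieBkt_val hΩ h (lieBkt hΩ f g) z,
      derivΩ_bkt hΩ g h z, derivΩ_bkt hΩ h f z, derivΩ_bkt hΩ f g z,
      lieBkt_val hΩ g h z, lieBkt_val hΩ h f z, lieBkt_val hΩ f g z]
  ring
lemma valA_add (f g : ↥(analyticAlg Ω)) (z : Ω) : (f + g).1 z = f.1 z + g.1 z := rfl
lemma valA_sub (f g : ↥(analyticAlg Ω)) (z : Ω) : (f - g).1 z = f.1 z - g.1 z := rfl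
lemma valA_mul (f g : ↥(analyticAlg Ω)) (z : Ω) : (f * g).1 z = f.1 z * g.1 z := rfl
lemma valA_smul (c : ℂ) (f : ↥(analyticAlg Ω)) (z : Ω) : (c • f).1 z = c * f.1 z := rfl
lemma valA_one (z : Ω) : ((1 : ↥(analyticAlg Ω))).1 z = 1 := rfl
lemma mkA_val (F : ℂ → ℂ) (hF : DifferentiableOn ℂ F Ω) (z : Ω) : (mkA Ω F hF).1 z = F z := rfl
lemma DD_val (hΩ : IsOpen Ω) (f : ↥(analyticAlg Ω)) (z : Ω) :
    (DD hΩ f).1 z = derivΩ Ω f.1 z := rfl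

/-- The identity function as an element. -/
def zA (Ω : Set ℂ) : ↥(analyticAlg Ω) := mkA Ω id differentiable_id.differentiableOn

lemma derivΩ_zA (hΩ : IsOpen Ω) (z : Ω) : derivΩ Ω (zA Ω).1 z = 1 := by
  rw [derivΩ_spec hΩ (f := ((zA Ω) : Ω → ℂ)) (F := id) (fun _ => rfl) z, deriv_id]

/-- Exponential functions as elements. -/
def EA (Ω : Set ℂ) (l : ℂ) : ↥(analyticAlg Ω) :=
  mkA Ω (fun w => Complex.exp (l * w))
    ((Complex.differentiable_exp.comp (differentiable_id.const_mul l)).differentiableOn)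

lemma derivΩ_EA (hΩ : IsOpen Ω) (l : ℂ) (z : Ω) :
    derivΩ Ω (EA Ω l).1 z = l * Complex.exp (l * z) := by
  rw [derivΩ_spec hΩ (f := ((EA Ω l) : Ω → ℂ)) (F := fun w => Complex.exp (l * w)) (fun _ => rfl) z]
  have : HasDerivAt (fun w => Complex.exp (l * w)) (Complex.exp (l * (z : ℂ)) * l) z :=
    ((hasDerivAt_id (z : ℂ)).const_mul l).cexp.congr_deriv (by simp)
  rw [this.deriv]; show cexp (l * (z:ℂ)) * l = _ ; ring

lemma EA_zero : EA Ω 0 = 1 := valA_ext fun z => by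
  simp [EA, mkA, valA_one]

lemma DD_zA (hΩ : IsOpen Ω) : DD hΩ (zA Ω) = 1 :=
  valA_ext fun z => by rw [DD_val, derivΩ_zA hΩ z, valA_one]

lemma DD_EA (hΩ : IsOpen Ω) (l : ℂ) : DD hΩ (EA Ω l) = l • EA Ω l :=
  valA_ext fun z => by rw [DD_val, derivΩ_EA hΩ l z, valA_smul]; rfl

lemma bkt_zA_right (hΩ : IsOpen Ω) (f : ↥(analyticAlg Ω)) :
    lieBkt hΩ f (zA Ω) = f - zA Ω * DD hΩ f :=
  valA_ext fun z => by
    rw [lieBkt_val, derivΩ_zA hΩ z, valA_sub, valA_mul, DD_val]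
    ring

lemma DD_zA_mul (hΩ : IsOpen Ω) (f : ↥(analyticAlg Ω)) :
    DD hΩ (zA Ω * f) = f + zA Ω * DD hΩ f :=
  valA_ext fun z => by
    rw [DD_val, derivΩ_mul hΩ (zA Ω) f z, derivΩ_zA hΩ z, valA_add, valA_mul, DD_val]
    ring

lemma bkt_zA_sq (hΩ : IsOpen Ω) (f : ↥(analyticAlg Ω)) :
    lieBkt hΩ f (zA Ω * zA Ω) = (2:ℂ) • (zA Ω * f) - zA Ω * (zA Ω * DD hΩ f) :=
  valA_ext fun z => by
    rw [lieBkt_val, derivΩ_mul hΩ (zA Ω) (zA Ω) z, derivΩ_zA hΩ z, valA_sub, valA_smul,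
        valA_mul, valA_mul, valA_mul, valA_mul, DD_val]
    ring

lemma bkt_EA_EA (hΩ : IsOpen Ω) (a b : ℂ) :
    lieBkt hΩ (EA Ω a) (EA Ω b) = (b - a) • EA Ω (a + b) :=
  valA_ext fun z => by
    rw [lieBkt_val, derivΩ_EA hΩ a z, derivΩ_EA hΩ b z, valA_smul]
    show (EA Ω a).1 z * (b * Complex.exp (b * z)) - a * Complex.exp (a * z) * (EA Ω b).1 z
      = (b - a) * Complex.exp ((a + b) * z)
    show Complex.exp (a * z) * (b * Complex.exp (b * z))
      - a * Complex.exp (a * z) * Complex.exp (b * z) = (b - a) * Complex.exp ((a + b) * z)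
    rw [show ((a + b) * (z:ℂ)) = a * z + b * z by ring, Complex.exp_add]
    ring

lemma bkt_EA_conj (hΩ : IsOpen Ω) (l : ℂ) (g : ↥(analyticAlg Ω)) :
    lieBkt hΩ (EA Ω (-l) * g) (EA Ω l) = ((2:ℂ) * l) • g - DD hΩ g :=
  valA_ext fun z => by
    rw [lieBkt_val, derivΩ_EA hΩ l z, derivΩ_mul hΩ (EA Ω (-l)) g z, derivΩ_EA hΩ (-l) z,
        valA_sub, valA_smul, valA_mul, DD_val]
    show Complex.exp (-l * z) * g.1 z * (l * Complex.exp (l * z))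
        - (Complex.exp (-l * z) * derivΩ Ω g.1 z + -l * Complex.exp (-l * z) * g.1 z)
          * Complex.exp (l * z)
      = 2 * l * g.1 z - derivΩ Ω g.1 z
    have he : Complex.exp (-l * z) * Complex.exp (l * z) = 1 := by
      rw [← Complex.exp_add, show (-l * (z:ℂ) + l * z) = 0 by ring, Complex.exp_zero]
    calc Complex.exp (-l * z) * g.1 z * (l * Complex.exp (l * z))
        - (Complex.exp (-l * z) * derivΩ Ω g.1 z + -l * Complex.exp (-l * z) * g.1 z)
          * Complex.exp (l * z)
        = (Complex.exp (-l * z) * Complex.exp (l * z)) * (2 * l * g.1 z - derivΩ Ω g.1 z) := by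
          ring
      _ = 2 * l * g.1 z - derivΩ Ω g.1 z := by rw [he]; ring

lemma bkt_zA_zA_sq (hΩ : IsOpen Ω) :
    lieBkt hΩ (zA Ω) (zA Ω * zA Ω) = zA Ω * zA Ω :=
  valA_ext fun z => by
    rw [lieBkt_val, derivΩ_mul hΩ (zA Ω) (zA Ω) z, derivΩ_zA hΩ z, valA_mul]
    show (z:ℂ) * ((zA Ω).1 z * 1 + 1 * (zA Ω).1 z) - 1 * ((zA Ω).1 z * (zA Ω).1 z)
      = (zA Ω).1 z * (zA Ω).1 z
    show (z:ℂ) * ((z:ℂ) * 1 + 1 * (z:ℂ)) - 1 * ((z:ℂ) * (z:ℂ)) = (z:ℂ) * (z:ℂ)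
    ring
lemma bkt_sub_left (hΩ : IsOpen Ω) (f g h : ↥(analyticAlg Ω)) :
    lieBkt hΩ (f - g) h = lieBkt hΩ f h - lieBkt hΩ g h := by
  rw [sub_eq_add_neg, ← neg_one_smul ℂ g, bkt_add_left, bkt_smul_left, neg_one_smul,
      ← sub_eq_add_neg]

lemma bkt_sub_right (hΩ : IsOpen Ω) (f g h : ↥(analyticAlg Ω)) :
    lieBkt hΩ f (g - h) = lieBkt hΩ f g - lieBkt hΩ f h := by
  rw [sub_eq_add_neg, ← neg_one_smul ℂ h, bkt_add_right, bkt_smul_right, neg_one_smul,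
      ← sub_eq_add_neg]

lemma key2 (hΩ : IsOpen Ω) (φ : ↥(analyticAlg Ω) →ₗ[ℂ] ℂ)
    (hbr : ∀ f g, φ f = 0 → φ g = 0 → φ (lieBkt hΩ f g) = 0)
    (e : ↥(analyticAlg Ω)) (he : φ e = 1) (f g : ↥(analyticAlg Ω)) :
    φ (lieBkt hΩ f g) = φ f * φ (lieBkt hΩ e g) - φ g * φ (lieBkt hΩ e f) := by
  have hf0 : φ (f - φ f • e) = 0 := by
    rw [map_sub, map_smul, he, smul_eq_mul, mul_one, sub_self]
  have hg0 : φ (g - φ g • e) = 0 := by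
    rw [map_sub, map_smul, he, smul_eq_mul, mul_one, sub_self]
  have h1 : lieBkt hΩ (f - φ f • e) (g - φ g • e)
      = lieBkt hΩ f g - φ g • lieBkt hΩ f e - φ f • lieBkt hΩ e g
        + φ f • (φ g • lieBkt hΩ e e) := by
    rw [bkt_sub_left, bkt_sub_right, bkt_sub_right, bkt_smul_left, bkt_smul_right,
        bkt_smul_left, bkt_smul_right]
    abel
  have h2 := hbr _ _ hf0 hg0
  rw [h1, bkt_self] at h2
  simp only [smul_zero, add_zero, map_sub, map_smul, smul_eq_mul] at h2
  have ha : φ (lieBkt hΩ f e) = - φ (lieBkt hΩ e f) := by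
    rw [bkt_antisymm hΩ f e, map_neg]
  rw [ha] at h2
  linear_combination h2

lemma key3 (hΩ : IsOpen Ω) (φ : ↥(analyticAlg Ω) →ₗ[ℂ] ℂ)
    (hbr : ∀ f g, φ f = 0 → φ g = 0 → φ (lieBkt hΩ f g) = 0)
    (e : ↥(analyticAlg Ω)) (he : φ e = 1) {g h : ↥(analyticAlg Ω)}
    (hg : φ g = 0) (hh : φ h = 0) :
    φ (lieBkt hΩ e (lieBkt hΩ g h)) = 0 := by
  have hj := congrArg φ (jacobi hΩ e g h)
  rw [map_add, map_add, map_zero] at hj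
  have e1 := key2 hΩ φ hbr e he g (lieBkt hΩ h e)
  have e2 := key2 hΩ φ hbr e he h (lieBkt hΩ e g)
  have ha : φ (lieBkt hΩ h e) = - φ (lieBkt hΩ e h) := by
    rw [bkt_antisymm hΩ h e, map_neg]
  rw [hg, ha] at e1
  rw [hh] at e2
  -- e1 : φ [g,[h,e]] = 0 * _ - (-φ[e,h]) * φ[e,g]
  -- e2 : φ [h,[e,g]] = 0 * _ - φ[e,g] * φ[e,h]
  linear_combination hj - e1 - e2
lemma caseB (hΩ : IsOpen Ω) (φ : ↥(analyticAlg Ω) →ₗ[ℂ] ℂ)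
    (hbr : ∀ f g, φ f = 0 → φ g = 0 → φ (lieBkt hΩ f g) = 0)
    (e : ↥(analyticAlg Ω)) (he : φ e = 1) (h1 : φ (1 : ↥(analyticAlg Ω)) = 0) : False := by
  set c := φ (lieBkt hΩ e 1) with hc
  have hDf : ∀ f, φ (DD hΩ f) = - c * φ f := by
    intro f
    have hk := key2 hΩ φ hbr e he f 1
    rw [bkt_one_right, map_neg, h1] at hk
    linear_combination -hk
  have hEA : ∀ a : ℂ, a ≠ -c → φ (EA Ω a) = 0 := by
    intro a ha
    have hk := hDf (EA Ω a)
    rw [DD_EA, map_smul, smul_eq_mul] at hk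
    have h2 : (a + c) * φ (EA Ω a) = 0 := by linear_combination hk
    rcases mul_eq_zero.1 h2 with h | h
    · exact absurd (by linear_combination h) ha
    · exact h
  have hχ : ∀ l : ℂ, φ (lieBkt hΩ e (EA Ω l)) = 0 := by
    intro l
    obtain ⟨a, haS⟩ := Infinite.exists_notMem_finset ({-c, l + c, l / 2} : Finset ℂ)
    simp only [Finset.mem_insert, Finset.mem_singleton] at haS
    push_neg at haS
    obtain ⟨ha1, ha2, ha3⟩ := haS
    have hga : φ (EA Ω a) = 0 := hEA a ha1
    have hgb : φ (EA Ω (l - a)) = 0 := hEA (l - a) (by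
      intro h; apply ha2; linear_combination -h)
    have h3 := key3 hΩ φ hbr e he hga hgb
    rw [bkt_EA_EA, show a + (l - a) = l by ring, bkt_smul_right, map_smul, smul_eq_mul] at h3
    rcases mul_eq_zero.1 h3 with h | h
    · exact absurd (by linear_combination -h/2 : a = l / 2) ha3
    · exact h
  have hc0 : c = 0 := by
    have h4 := hχ 0
    rw [EA_zero] at h4
    rw [hc]; exact h4
  have hzero : ∀ g : ↥(analyticAlg Ω), φ g = 0 := by
    intro g
    have hE1 : φ (EA Ω 1) = 0 := hEA 1 (by rw [hc0]; norm_num)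
    have hk := key2 hΩ φ hbr e he (EA Ω (-1) * g) (EA Ω 1)
    rw [bkt_EA_conj, hE1, hχ 1, map_sub, map_smul, smul_eq_mul, hDf g, hc0] at hk
    have : (2:ℂ) * φ g = 0 := by linear_combination hk
    have h2 : (2:ℂ) ≠ 0 := by norm_num
    exact (mul_eq_zero.1 this).resolve_left h2
  have := hzero e
  rw [he] at this
  exact one_ne_zero this

end Stmt14

open Stmt14

/-- the Lie subalgebras of codimension one in `A(Omega)` are exactly the
point-evaluation kernels `M_alpha`, `alpha in Omega`. -/
theorem stmt14 (Ω : Set ℂ) (hΩ : IsOpen Ω) (hne : Ω.Nonempty)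
    (L : Submodule ℂ ↥(analyticAlg Ω))
    (hL : ∀ f g : ↥(analyticAlg Ω), f ∈ L → g ∈ L → lieBkt hΩ f g ∈ L) :
    Module.finrank ℂ (↥(analyticAlg Ω) ⧸ L) = 1 ↔
      ∃ α : Ω, ∀ f : ↥(analyticAlg Ω), f ∈ L ↔ f.1 α = 0 := by
  constructor
  · intro hdim
    have hfin : Module.Finite ℂ (↥(analyticAlg Ω) ⧸ L) :=
      Module.finite_of_finrank_eq_succ (n := 0) hdim
    let b := Module.finBasisOfFinrankEq ℂ (↥(analyticAlg Ω) ⧸ L) hdim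
    let q := b.equivFun
    let φ0 : ↥(analyticAlg Ω) →ₗ[ℂ] ℂ :=
      (LinearMap.proj (0 : Fin 1)).comp (q.toLinearMap.comp L.mkQ)
    have hval0 : ∀ f, φ0 f = q (L.mkQ f) 0 := fun f => rfl
    have hker0 : ∀ f, φ0 f = 0 ↔ f ∈ L := by
      intro f
      rw [hval0]
      constructor
      · intro h
        have hq : q (L.mkQ f) = 0 := funext fun j => by
          rw [Subsingleton.elim j (0 : Fin 1)]; exact h
        have hmk : L.mkQ f = 0 := by
          apply q.injective; rw [hq, map_zero]
        rwa [Submodule.mkQ_apply, Submodule.Quotient.mk_eq_zero] at hmk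
      · intro h
        have hmk : L.mkQ f = 0 := by
          rwa [Submodule.mkQ_apply, Submodule.Quotient.mk_eq_zero]
        rw [hmk, map_zero]; rfl
    obtain ⟨e0, he0⟩ : ∃ e0, φ0 e0 = 1 := by
      obtain ⟨e0, he0⟩ := Submodule.mkQ_surjective L (q.symm (fun _ => 1))
      refine ⟨e0, ?_⟩
      rw [hval0, he0, q.apply_symm_apply]
    by_cases h1 : φ0 (1 : ↥(analyticAlg Ω)) = 0
    · exact absurd (caseB hΩ φ0
        (fun f g hf hg => (hker0 _).2 (hL f g ((hker0 f).1 hf) ((hker0 g).1 hg)))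
        e0 he0 h1) not_false
    · set φ : ↥(analyticAlg Ω) →ₗ[ℂ] ℂ := (φ0 1)⁻¹ • φ0 with hφdef
      have hφval : ∀ f, φ f = (φ0 1)⁻¹ * φ0 f := fun f => rfl
      have hφ1 : φ (1 : ↥(analyticAlg Ω)) = 1 := by
        rw [hφval, inv_mul_cancel₀ h1]
      have hker : ∀ f, φ f = 0 ↔ f ∈ L := by
        intro f
        rw [← hker0 f, hφval]
        constructor
        · intro h
          rcases mul_eq_zero.1 h with h | h
          · exact absurd h (inv_ne_zero h1)
          · exact h
        · intro h; rw [h, mul_zero]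
      have hbr : ∀ f g, φ f = 0 → φ g = 0 → φ (lieBkt hΩ f g) = 0 :=
        fun f g hf hg => (hker _).2 (hL f g ((hker f).1 hf) ((hker g).1 hg))
      have R : ∀ f g, φ (lieBkt hΩ f g) = φ f * φ (DD hΩ g) - φ g * φ (DD hΩ f) := by
        intro f g
        have h := key2 hΩ φ hbr 1 hφ1 f g
        rwa [bkt_one_left, bkt_one_left] at h
      set α := φ (zA Ω) with hαdef
      have hDz : φ (DD hΩ (zA Ω)) = 1 := by rw [DD_zA]; exact hφ1
      have hDz2 : φ (DD hΩ (zA Ω * zA Ω)) = 2 * α := by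
        rw [DD_zA_mul, DD_zA, mul_one, map_add]; ring
      have hz2 : φ (zA Ω * zA Ω) = α * α := by
        have h := R (zA Ω) (zA Ω * zA Ω)
        rw [bkt_zA_zA_sq, hDz2, hDz] at h
        linear_combination h / 2
      have A1 : ∀ f, φ (zA Ω * DD hΩ f) = α * φ (DD hΩ f) := by
        intro f
        have h := R f (zA Ω)
        rw [bkt_zA_right, hDz, map_sub] at h
        linear_combination -h
      have A4 : ∀ f, φ (zA Ω * f) = α * φ f := by
        intro f
        have h3 : φ (zA Ω * f) + φ (zA Ω * (zA Ω * DD hΩ f))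
            = α * φ f + α * (α * φ (DD hΩ f)) := by
          have h := A1 (zA Ω * f)
          rw [DD_zA_mul, mul_add, map_add, map_add, A1 f] at h
          linear_combination h
        have h2 : 2 * φ (zA Ω * f) - φ (zA Ω * (zA Ω * DD hΩ f))
            = 2 * α * φ f - (α * α) * φ (DD hΩ f) := by
          have h := R f (zA Ω * zA Ω)
          rw [bkt_zA_sq, hDz2, hz2, map_sub, map_smul, smul_eq_mul] at h
          linear_combination h
        linear_combination (h3 + h2) / 3
      have hαΩ : α ∈ Ω := by
        by_contra hnot
        have hinv : DifferentiableOn ℂ (fun w => (w - α)⁻¹) Ω := by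
          intro w hw
          have hww : w - α ≠ 0 := sub_ne_zero.2 fun h => hnot (h ▸ hw)
          exact ((differentiableAt_id.sub_const α).inv hww).differentiableWithinAt
        have hid : zA Ω * mkA Ω (fun w => (w - α)⁻¹) hinv
            - α • mkA Ω (fun w => (w - α)⁻¹) hinv = 1 := by
          refine valA_ext fun z => ?_
          rw [valA_sub, valA_mul, valA_smul, valA_one]
          show (z:ℂ) * ((z:ℂ) - α)⁻¹ - α * ((z:ℂ) - α)⁻¹ = 1
          have hzα : (z:ℂ) - α ≠ 0 := sub_ne_zero.2 fun h => hnot (h ▸ z.2)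
          linear_combination mul_inv_cancel₀ hzα
        have h := congrArg φ hid
        rw [map_sub, map_smul, A4 _, smul_eq_mul, hφ1] at h
        simp at h
      refine ⟨⟨α, hαΩ⟩, ?_⟩
      have hval : ∀ f : ↥(analyticAlg Ω), f.1 ⟨α, hαΩ⟩ = 0 → φ f = 0 := by
        intro f hf0
        obtain ⟨F, hF, hFf⟩ := f.2
        have hFα : F α = 0 := by
          have h := hFf ⟨α, hαΩ⟩; rw [hf0] at h; exact h
        have hg : DifferentiableOn ℂ (dslope F α) Ω := by
          intro w hw
          rcases eq_or_ne w α with hw2 | hwα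
          · rw [hw2]
            obtain ⟨p, hp⟩ := (hF.analyticOnNhd hΩ) α (hw2 ▸ hw)
            exact hp.has_fpower_series_dslope_fslope.analyticAt.differentiableAt.differentiableWithinAt
          · exact ((differentiableAt_dslope_of_ne hwα).2
              (hF.differentiableAt (hΩ.mem_nhds hw))).differentiableWithinAt
        have hfg : f = zA Ω * mkA Ω (dslope F α) hg - α • mkA Ω (dslope F α) hg := by
          refine valA_ext fun z => ?_
          rw [valA_sub, valA_mul, valA_smul]
          show f.1 z = (z:ℂ) * dslope F α z - α * dslope F α z
          have hd := sub_smul_dslope F α z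
          rw [smul_eq_mul] at hd
          rw [← hFf z]
          linear_combination -hd + hFα
        rw [hfg, map_sub, map_smul, A4 _, smul_eq_mul, sub_self]
      intro f
      constructor
      · intro hfL
        have hφf : φ f = 0 := (hker f).2 hfL
        have h0 : (f - f.1 ⟨α, hαΩ⟩ • 1).1 ⟨α, hαΩ⟩ = 0 := by
          rw [valA_sub, valA_smul, valA_one, mul_one, sub_self]
        have h := hval _ h0
        rw [map_sub, map_smul, hφ1, smul_eq_mul, mul_one, hφf] at h
        linear_combination -h
      · intro hf0
        exact (hker f).1 (hval f hf0)
  · rintro ⟨α, hα⟩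
    let ev : ↥(analyticAlg Ω) →ₗ[ℂ] ℂ :=
      { toFun := fun f => f.1 α, map_add' := fun f g => rfl, map_smul' := fun c f => rfl }
    have hsurj : Function.Surjective ev := by
      intro w
      refine ⟨w • 1, ?_⟩
      show (w • (1 : ↥(analyticAlg Ω))).1 α = w
      rw [valA_smul, valA_one, mul_one]
    have hkerev : LinearMap.ker ev = L := by
      ext f
      rw [LinearMap.mem_ker]
      exact (hα f).symm
    rw [← hkerev, (LinearMap.quotKerEquivOfSurjective ev hsurj).finrank_eq,
      Module.finrank_self]

end
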